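/- Milnor–Wood inequality for surfaces with boundary: let n ≥ 0 and b ≥ 1, and let a₁, b₁, …, aₙ, bₙ, c₁, …, c_b be orientation-preserving homeomorphisms of ℝ satisfying f(x+1) = f(x)+1 for all x, such that [a₁,b₁] ∘ ⋯ ∘ [aₙ,bₙ] ∘ c₁ ∘ ⋯ ∘ c_b is the identity. Then the sum of the rotation numbers of the boundary elements satisfies r(c₁) + ⋯ + r(c_b) ≤ max(0, 2n + b − 2) (the right-hand side is max(0, −χ) for the compact oriented surface of genus n with b boundary components). -/

import Mathlib

open Filter Topology
open scoped commutatorElement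

local notation "τ" => CircleDeg1Lift.translationNumber

namespace MWAux

open CircleDeg1Lift

lemma cast_help (k m : ℤ) (d : ℕ) : ((k * d + m : ℤ) : ℝ) = (k : ℝ) * (d : ℝ) + (m : ℝ) := by
  push_cast; ring

lemma cast_mul_nat (l : ℤ) (d : ℕ) : ((l * d : ℤ) : ℝ) = (l : ℝ) * (d : ℝ) := by
  push_cast; ring

/-- Wrapped orbit sequence: `X j = f^[j % q] x + k * (j / q)`. -/
noncomputable def XX (f : CircleDeg1Lift) (q : ℕ) (k : ℤ) (x : ℝ) (j : ℕ) : ℝ :=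
  f^[j % q] x + (k : ℝ) * ((j / q : ℕ) : ℝ)

lemma XX_zero (f : CircleDeg1Lift) (q : ℕ) (k : ℤ) (x : ℝ) : XX f q k x 0 = x := by
  simp [XX]

lemma XX_q (f : CircleDeg1Lift) (q : ℕ) (hq : 0 < q) (k : ℤ) (x : ℝ) :
    XX f q k x q = x + k := by
  simp [XX, Nat.mod_self, Nat.div_self hq]

lemma XX_lt (f : CircleDeg1Lift) (q : ℕ) (k : ℤ) (x : ℝ) {i : ℕ} (h : i < q) :
    XX f q k x i = f^[i] x := by
  simp [XX, Nat.mod_eq_of_lt h, Nat.div_eq_of_lt h]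

lemma XX_step (f : CircleDeg1Lift) (q : ℕ) (hq : 0 < q) (k : ℤ) (x : ℝ)
    (hw : x + k ≤ f^[q] x) (j : ℕ) (m : ℤ) :
    XX f q k x (j + 1) + m ≤ f (XX f q k x j + m) := by
  have hjq : j % q < q := Nat.mod_lt _ hq
  have hj : q * (j / q) + j % q = j := Nat.div_add_mod j q
  have hXj : XX f q k x j + (m : ℝ) = f^[j % q] x + ((k * (j / q : ℕ) + m : ℤ) : ℝ) := by
    rw [cast_help]; simp only [XX]; ring
  have key : f (XX f q k x j + m) = f^[j % q + 1] x + ((k * (j / q : ℕ) + m : ℤ) : ℝ) := by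
    rw [hXj, f.map_add_int, ← Function.iterate_succ_apply' f]
  rcases Nat.lt_or_ge (j % q + 1) q with hlt | hge
  · -- no wrap
    have h1 : (j + 1) % q = j % q + 1 := by
      conv_lhs => rw [← hj, Nat.add_assoc]
      rw [Nat.mul_add_mod, Nat.mod_eq_of_lt hlt]
    have h2 : (j + 1) / q = j / q := by
      conv_lhs => rw [← hj, Nat.add_assoc]
      rw [Nat.mul_add_div hq, Nat.div_eq_of_lt hlt, Nat.add_zero]
    rw [key]
    apply le_of_eq
    simp only [XX, h1, h2]
    rw [cast_help]; ring
  · -- wrap : j % q + 1 = q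
    have heq : j % q + 1 = q := by omega
    have hj1 : j + 1 = q * (j / q + 1) := by
      rw [Nat.mul_add, Nat.mul_one]; omega
    have h1 : (j + 1) % q = 0 := by rw [hj1]; exact Nat.mul_mod_right _ _
    have h2 : (j + 1) / q = j / q + 1 := by rw [hj1]; exact Nat.mul_div_cancel_left _ hq
    have hfq : f^[j % q + 1] x = f^[q] x := by rw [heq]
    rw [key, hfq]
    simp only [XX, h1, h2]
    rw [cast_help]
    simp only [Function.iterate_zero, id_eq, Nat.cast_add, Nat.cast_one]
    have hw' : x + (k : ℝ) ≤ f^[q] x := hw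
    nlinarith [hw']

/-- The floor-loss sums. -/
noncomputable def SS (f g : CircleDeg1Lift) (q : ℕ) (k l : ℤ) (x y : ℝ) (β t : ℕ) : ℤ :=
  ∑ i ∈ Finset.range t,
    (⌊XX f q k x i - XX g q l y (β + i)⌋ + ⌊XX g q l y (β + i + 1) - XX f q k x i⌋)

lemma SS_succ (f g : CircleDeg1Lift) (q : ℕ) (k l : ℤ) (x y : ℝ) (β t : ℕ) :
    SS f g q k l x y β (t + 1)
      = SS f g q k l x y β t + ⌊XX f q k x t - XX g q l y (β + t)⌋
        + ⌊XX g q l y (β + t + 1) - XX f q k x t⌋ := by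
  simp only [SS, Finset.sum_range_succ]; ring

lemma chain (f g : CircleDeg1Lift) (q : ℕ) (hq : 0 < q) (k l : ℤ) (x y : ℝ)
    (hx : x + k ≤ f^[q] x) (hy : y + l ≤ g^[q] y) (β : ℕ) :
    ∀ t, XX f q k x t + ((SS f g q k l x y β t : ℤ) : ℝ) ≤ (f * g)^[t] x := by
  intro t
  induction t with
  | zero => simp [XX_zero, SS]
  | succ t ih =>
    set S : ℤ := SS f g q k l x y β t with hSdef
    set F1 : ℤ := ⌊XX f q k x t - XX g q l y (β + t)⌋ with hF1
    set F2 : ℤ := ⌊XX g q l y (β + t + 1) - XX f q k x t⌋ with hF2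
    have hS : SS f g q k l x y β (t + 1) = S + F1 + F2 := SS_succ f g q k l x y β t
    have hfl1 : (F1 : ℝ) ≤ XX f q k x t - XX g q l y (β + t) := Int.floor_le _
    have hfl2 : (F2 : ℝ) ≤ XX g q l y (β + t + 1) - XX f q k x t := Int.floor_le _
    have hg2 : XX g q l y (β + t + 1) + ((S + F1 : ℤ) : ℝ) ≤ g ((f * g)^[t] x) := by
      calc XX g q l y (β + t + 1) + ((S + F1 : ℤ) : ℝ)
          ≤ g (XX g q l y (β + t) + (S + F1 : ℤ)) := XX_step g q hq l y hy (β + t) (S + F1)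
        _ ≤ g ((f * g)^[t] x) := by
            apply g.mono
            have h1 : XX g q l y (β + t) + ((S + F1 : ℤ) : ℝ) ≤ XX f q k x t + (S : ℝ) := by
              rw [Int.cast_add]; linarith
            exact h1.trans ih
    calc XX f q k x (t + 1) + ((SS f g q k l x y β (t + 1) : ℤ) : ℝ)
        = XX f q k x (t + 1) + ((S + F1 + F2 : ℤ) : ℝ) := by rw [hS]
      _ ≤ f (XX f q k x t + ((S + F1) + F2 : ℤ)) := by
          exact XX_step f q hq k x hx t ((S + F1) + F2)
      _ ≤ f (g ((f * g)^[t] x)) := by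
          apply f.mono
          have h2 : XX f q k x t + (((S + F1) + F2 : ℤ) : ℝ)
              ≤ XX g q l y (β + t + 1) + ((S + F1 : ℤ) : ℝ) := by
            push_cast; push_cast at hfl2; linarith
          exact h2.trans hg2
      _ = (f * g)^[t + 1] x := by
          rw [Function.iterate_succ_apply', CircleDeg1Lift.mul_apply]

lemma per_beta (f g : CircleDeg1Lift) (q : ℕ) (hq : 0 < q) (k l : ℤ) (x y : ℝ)
    (hx : x + k ≤ f^[q] x) (hy : y + l ≤ g^[q] y) (β : ℕ) :
    ((k + SS f g q k l x y β q : ℤ) : ℝ) ≤ (q : ℝ) * τ (f * g) := by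
  have h := chain f g q hq k l x y hx hy β q
  rw [XX_q f q hq] at h
  have h2 : x + ((k + SS f g q k l x y β q : ℤ) : ℝ) ≤ ((f * g) ^ q) x := by
    rw [CircleDeg1Lift.coe_pow]
    push_cast
    linarith
  have h3 := ((f * g) ^ q).le_translationNumber_of_add_int_le h2
  rwa [CircleDeg1Lift.translationNumber_pow] at h3


lemma sum_shift (q : ℕ) (hq : 0 < q) (t : ℕ) (F : ℕ → ℤ) :
    ∑ β ∈ Finset.range q, F ((β + t) % q) = ∑ c ∈ Finset.range q, F c := by
  have h1 : q * (t / q) + t % q = t := Nat.div_add_mod t q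
  have h2 : t % q < q := Nat.mod_lt _ hq
  have hmul : t + (q - t % q) = q * (t / q + 1) := by
    rw [Nat.mul_add, Nat.mul_one]; omega
  have key : ∀ a : ℕ, (a + t + (q - t % q)) % q = a % q := by
    intro a
    rw [Nat.add_assoc, hmul, Nat.add_mul_mod_self_left]
  refine Finset.sum_nbij' (i := fun β => (β + t) % q) (j := fun c => (c + (q - t % q)) % q)
    ?_ ?_ ?_ ?_ ?_
  · intro a ha; exact Finset.mem_range.mpr (Nat.mod_lt _ hq)
  · intro a ha; exact Finset.mem_range.mpr (Nat.mod_lt _ hq)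
  · intro a ha
    show ((a + t) % q + (q - t % q)) % q = a
    rw [Nat.mod_add_mod, key a, Nat.mod_eq_of_lt (Finset.mem_range.mp ha)]
  · intro c hc
    show ((c + (q - t % q)) % q + t) % q = c
    rw [Nat.mod_add_mod]
    have hcomm : c + (q - t % q) + t = c + t + (q - t % q) := by omega
    rw [hcomm, key c, Nat.mod_eq_of_lt (Finset.mem_range.mp hc)]
  · intro a ha; rfl

lemma SS_formula (f g : CircleDeg1Lift) (q : ℕ) (hq : 0 < q) (k l : ℤ) (x y : ℝ)
    {β : ℕ} (hβ : β < q) :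
    SS f g q k l x y β q
      = l + ∑ i ∈ Finset.range q,
          (⌊f^[i] x - g^[(β + i) % q] y⌋ + ⌊g^[(β + i + 1) % q] y - f^[i] x⌋) := by
  have key : ∀ i ∈ Finset.range q,
      (⌊XX f q k x i - XX g q l y (β + i)⌋ + ⌊XX g q l y (β + i + 1) - XX f q k x i⌋)
        = (⌊f^[i] x - g^[(β + i) % q] y⌋ + ⌊g^[(β + i + 1) % q] y - f^[i] x⌋)
          + (l * ((β + i + 1) / q : ℕ) - l * ((β + i) / q : ℕ)) := by
    intro i hi
    have hiq : i < q := Finset.mem_range.mp hi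
    rw [XX_lt f q k x hiq]
    have e1 : XX g q l y (β + i) = g^[(β + i) % q] y + ((l * ((β + i) / q : ℕ) : ℤ) : ℝ) := by
      simp only [XX]; rw [cast_mul_nat]
    have e2 : XX g q l y (β + i + 1)
        = g^[(β + i + 1) % q] y + ((l * ((β + i + 1) / q : ℕ) : ℤ) : ℝ) := by
      simp only [XX]; rw [cast_mul_nat]
    rw [e1, e2]
    rw [show f^[i] x - (g^[(β + i) % q] y + ((l * ((β + i) / q : ℕ) : ℤ) : ℝ))
        = f^[i] x - g^[(β + i) % q] y - ((l * ((β + i) / q : ℕ) : ℤ) : ℝ) by ring]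
    rw [show g^[(β + i + 1) % q] y + ((l * ((β + i + 1) / q : ℕ) : ℤ) : ℝ) - f^[i] x
        = g^[(β + i + 1) % q] y - f^[i] x + ((l * ((β + i + 1) / q : ℕ) : ℤ) : ℝ) by ring]
    rw [Int.floor_sub_intCast, Int.floor_add_intCast]
    ring
  rw [SS, Finset.sum_congr rfl key, Finset.sum_add_distrib]
  have tele : ∑ i ∈ Finset.range q, (l * ((β + i + 1) / q : ℕ) - l * ((β + i) / q : ℕ))
      = l := by
    have := Finset.sum_range_sub (f := fun i => (l * ((β + i) / q : ℕ) : ℤ)) q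
    calc ∑ i ∈ Finset.range q, (l * ((β + i + 1) / q : ℕ) - l * ((β + i) / q : ℕ))
        = ∑ i ∈ Finset.range q,
            ((fun i => (l * ((β + i) / q : ℕ) : ℤ)) (i + 1) - (fun i => (l * ((β + i) / q : ℕ) : ℤ)) i) := by
          apply Finset.sum_congr rfl; intro i _
          simp only []
          rw [show β + i + 1 = β + (i + 1) by omega]
      _ = l * ((β + q) / q : ℕ) - l * ((β + 0) / q : ℕ) := by rw [this]
      _ = l := by
          have d1 : (β + q) / q = 1 := by rw [Nat.add_div_right _ hq, Nat.div_eq_of_lt hβ]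
          have d2 : (β + 0) / q = 0 := by rw [Nat.add_zero]; exact Nat.div_eq_of_lt hβ
          rw [d1, d2]; simp
  rw [tele]; ring

lemma floor_pair (A : ℝ) : (-1 : ℤ) ≤ ⌊A⌋ + ⌊-A⌋ := by
  rw [Int.floor_neg]
  have := Int.ceil_le_floor_add_one A
  omega

lemma exists_good_beta (f g : CircleDeg1Lift) (q : ℕ) (hq : 0 < q) (k l : ℤ) (x y : ℝ) :
    ∃ β, β < q ∧ l - q ≤ SS f g q k l x y β q := by
  by_contra hcon
  push_neg at hcon
  have hlt : ∀ β ∈ Finset.range q, SS f g q k l x y β q ≤ l - q - 1 := by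
    intro β hβ
    have := hcon β (Finset.mem_range.mp hβ)
    omega
  have hsum_le : ∑ β ∈ Finset.range q, SS f g q k l x y β q ≤ q * (l - q - 1) := by
    calc ∑ β ∈ Finset.range q, SS f g q k l x y β q
        ≤ ∑ _β ∈ Finset.range q, (l - q - 1) := Finset.sum_le_sum hlt
      _ = q * (l - q - 1) := by rw [Finset.sum_const, Finset.card_range]; ring
  have hsum_ge : (q : ℤ) * l - q * q ≤ ∑ β ∈ Finset.range q, SS f g q k l x y β q := by
    have hform : ∑ β ∈ Finset.range q, SS f g q k l x y β q
        = q * l + ∑ β ∈ Finset.range q, ∑ i ∈ Finset.range q,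
            (⌊f^[i] x - g^[(β + i) % q] y⌋ + ⌊g^[(β + i + 1) % q] y - f^[i] x⌋) := by
      rw [Finset.sum_congr rfl (fun β hβ => SS_formula f g q hq k l x y (Finset.mem_range.mp hβ))]
      rw [Finset.sum_add_distrib, Finset.sum_const, Finset.card_range]
      ring
    rw [hform]
    have hswap : ∑ β ∈ Finset.range q, ∑ i ∈ Finset.range q,
          (⌊f^[i] x - g^[(β + i) % q] y⌋ + ⌊g^[(β + i + 1) % q] y - f^[i] x⌋)
        = ∑ i ∈ Finset.range q, (∑ β ∈ Finset.range q, ⌊f^[i] x - g^[(β + i) % q] y⌋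
            + ∑ β ∈ Finset.range q, ⌊g^[(β + i + 1) % q] y - f^[i] x⌋) := by
      rw [Finset.sum_comm]
      apply Finset.sum_congr rfl; intro i _
      rw [Finset.sum_add_distrib]
    rw [hswap]
    have hbound : ∀ i ∈ Finset.range q,
        (-q : ℤ) ≤ ∑ β ∈ Finset.range q, ⌊f^[i] x - g^[(β + i) % q] y⌋
            + ∑ β ∈ Finset.range q, ⌊g^[(β + i + 1) % q] y - f^[i] x⌋ := by
      intro i _
      have e1 : ∑ β ∈ Finset.range q, ⌊f^[i] x - g^[(β + i) % q] y⌋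
          = ∑ c ∈ Finset.range q, ⌊f^[i] x - g^[c] y⌋ := by
        have := sum_shift q hq i (fun c => ⌊f^[i] x - g^[c] y⌋)
        simpa using this
      have e2 : ∑ β ∈ Finset.range q, ⌊g^[(β + i + 1) % q] y - f^[i] x⌋
          = ∑ c ∈ Finset.range q, ⌊g^[c] y - f^[i] x⌋ := by
        have := sum_shift q hq (i + 1) (fun c => ⌊g^[c] y - f^[i] x⌋)
        simp only [← Nat.add_assoc] at this
        simpa using this
      rw [e1, e2, ← Finset.sum_add_distrib]
      calc (-q : ℤ) = ∑ _c ∈ Finset.range q, (-1 : ℤ) := by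
            rw [Finset.sum_const, Finset.card_range]; ring
        _ ≤ ∑ c ∈ Finset.range q, (⌊f^[i] x - g^[c] y⌋ + ⌊g^[c] y - f^[i] x⌋) := by
            apply Finset.sum_le_sum
            intro c _
            have := floor_pair (f^[i] x - g^[c] y)
            rw [show -(f^[i] x - g^[c] y) = g^[c] y - f^[i] x by ring] at this
            exact this
    have : (- (q * q) : ℤ) ≤ ∑ i ∈ Finset.range q, (∑ β ∈ Finset.range q, ⌊f^[i] x - g^[(β + i) % q] y⌋
            + ∑ β ∈ Finset.range q, ⌊g^[(β + i + 1) % q] y - f^[i] x⌋) := by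
      calc (-(q * q) : ℤ) = ∑ _i ∈ Finset.range q, (-q : ℤ) := by
            rw [Finset.sum_const, Finset.card_range]; ring
        _ ≤ _ := Finset.sum_le_sum hbound
    linarith
  have hq' : (1 : ℤ) ≤ q := by exact_mod_cast hq
  nlinarith [hsum_le, hsum_ge]

lemma chain_main (f g : CircleDeg1Lift) (q : ℕ) (hq : 0 < q) (k l : ℤ) (x y : ℝ)
    (hx : x + k ≤ f^[q] x) (hy : y + l ≤ g^[q] y) :
    ((k : ℝ) + l - q) ≤ (q : ℝ) * τ (f * g) := by
  obtain ⟨β, hβ, hS⟩ := exists_good_beta f g q hq k l x y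
  have h := per_beta f g q hq k l x y hx hy β
  have h2 : ((k : ℝ) + l - q) ≤ ((k + SS f g q k l x y β q : ℤ) : ℝ) := by
    have : ((k + (l - q) : ℤ) : ℝ) ≤ ((k + SS f g q k l x y β q : ℤ) : ℝ) := by
      exact_mod_cast (by linarith : k + (l - (q : ℤ)) ≤ k + SS f g q k l x y β q)
    push_cast at this ⊢
    linarith
  linarith

lemma exists_point (h : CircleDeg1Lift) (hc : Continuous h) (m : ℤ) (hm : (m : ℝ) ≤ τ h) :
    ∃ x : ℝ, x + m ≤ h x := by
  by_contra hcon
  push_neg at hcon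
  have := CircleDeg1Lift.translationNumber_lt_of_forall_lt_add (f := h) hc (z := (m : ℝ)) hcon
  linarith

lemma unit_continuous (u : CircleDeg1Liftˣ) : Continuous ((u : CircleDeg1Lift) : ℝ → ℝ) := by
  rw [CircleDeg1Lift.continuous_iff_surjective]
  exact (CircleDeg1Lift.isUnit_iff_bijective.mp u.isUnit).2

lemma exists_floor_point (u : CircleDeg1Liftˣ) (q : ℕ) (hq : 0 < q) :
    ∃ x : ℝ, x + (⌊(q : ℝ) * τ (u : CircleDeg1Lift)⌋ : ℝ)
      ≤ ((u : CircleDeg1Lift) : ℝ → ℝ)^[q] x := by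
  have hcont : Continuous (((u : CircleDeg1Lift) ^ q : CircleDeg1Lift) : ℝ → ℝ) :=
    CircleDeg1Lift.continuous_pow (u : CircleDeg1Lift) (unit_continuous u) q
  have hτ : ((⌊(q : ℝ) * τ (u : CircleDeg1Lift)⌋ : ℤ) : ℝ) ≤ τ ((u : CircleDeg1Lift) ^ q) := by
    rw [CircleDeg1Lift.translationNumber_pow]
    exact Int.floor_le _
  obtain ⟨x, hx⟩ := exists_point _ hcont _ hτ
  refine ⟨x, ?_⟩
  rwa [CircleDeg1Lift.coe_pow] at hx

/-- The key quasimorphism bound: the translation number has defect at most 1 (lower bound). -/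
lemma defect_ge (u v : CircleDeg1Liftˣ) :
    τ (u : CircleDeg1Lift) + τ (v : CircleDeg1Lift) - 1 ≤ τ ((↑(u * v) : CircleDeg1Lift)) := by
  set r := τ (u : CircleDeg1Lift)
  set s := τ (v : CircleDeg1Lift)
  have main : ∀ q : ℕ, 0 < q → r + s - 1 - 2 / q ≤ τ ((↑(u * v) : CircleDeg1Lift)) := by
    intro q hq
    obtain ⟨x, hx⟩ := exists_floor_point u q hq
    obtain ⟨y, hy⟩ := exists_floor_point v q hq
    have h := chain_main (u : CircleDeg1Lift) (v : CircleDeg1Lift) q hq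
      ⌊(q : ℝ) * r⌋ ⌊(q : ℝ) * s⌋ x y hx hy
    have hqpos : (0 : ℝ) < q := by exact_mod_cast hq
    have hfr : (q : ℝ) * r - 1 ≤ (⌊(q : ℝ) * r⌋ : ℝ) := by
      have := Int.lt_floor_add_one ((q : ℝ) * r); linarith
    have hfs : (q : ℝ) * s - 1 ≤ (⌊(q : ℝ) * s⌋ : ℝ) := by
      have := Int.lt_floor_add_one ((q : ℝ) * s); linarith
    have hcoe : ((u * v : CircleDeg1Liftˣ) : CircleDeg1Lift)
        = (u : CircleDeg1Lift) * (v : CircleDeg1Lift) := rfl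
    rw [hcoe]
    have h2 : (q : ℝ) * r - 1 + ((q : ℝ) * s - 1) - q
        ≤ (q : ℝ) * τ ((u : CircleDeg1Lift) * (v : CircleDeg1Lift)) := by linarith
    have h4 : (q : ℝ) * (r + s - 1 - 2 / q)
        = (q : ℝ) * r - 1 + ((q : ℝ) * s - 1) - q := by
      field_simp; ring
    have h5 : (q : ℝ) * (r + s - 1 - 2 / q)
        ≤ (q : ℝ) * τ ((u : CircleDeg1Lift) * (v : CircleDeg1Lift)) := by
      rw [h4]; exact h2
    exact le_of_mul_le_mul_left h5 hqpos
  refine le_of_forall_pos_le_add ?_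
  intro ε hε
  obtain ⟨q, hq⟩ := exists_nat_gt (2 / ε)
  have hq0 : 0 < q := by
    by_contra hq0
    push_neg at hq0
    interval_cases q
    simp at hq
    have : 0 < 2 / ε := by positivity
    linarith
  have h := main q hq0
  have hqpos : (0 : ℝ) < q := by exact_mod_cast hq0
  have : 2 / (q : ℝ) < ε := by
    rw [div_lt_iff₀ hqpos]
    rw [div_lt_iff₀ hε] at hq
    linarith
  linarith

lemma comm_ge (u v : CircleDeg1Liftˣ) : (-1 : ℝ) ≤ τ ((↑⁅u, v⁆ : CircleDeg1Lift)) := by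
  have hdef := defect_ge (u * v * u⁻¹) v⁻¹
  have hconj : τ ((↑(u * v * u⁻¹) : CircleDeg1Lift)) = τ (v : CircleDeg1Lift) := by
    have : ((u * v * u⁻¹ : CircleDeg1Liftˣ) : CircleDeg1Lift)
        = (u : CircleDeg1Lift) * (v : CircleDeg1Lift) * ((u⁻¹ : CircleDeg1Liftˣ) : CircleDeg1Lift) := rfl
    rw [this]
    exact CircleDeg1Lift.translationNumber_conj_eq u (v : CircleDeg1Lift)
  have hinv : τ ((↑(v⁻¹ : CircleDeg1Liftˣ) : CircleDeg1Lift)) = - τ (v : CircleDeg1Lift) :=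
    CircleDeg1Lift.translationNumber_units_inv v
  have hcomm : ⁅u, v⁆ = (u * v * u⁻¹) * v⁻¹ := by
    rw [commutatorElement_def]
  rw [hcomm]
  rw [hconj, hinv] at hdef
  linarith

/-- translation number of a unit, as a function. -/
noncomputable def tu (u : CircleDeg1Liftˣ) : ℝ := τ (u : CircleDeg1Lift)

lemma prod_ge : ∀ (L : List CircleDeg1Liftˣ), L ≠ [] →
    (L.map tu).sum ≤ tu L.prod + L.length - 1 := by
  intro L
  induction L with
  | nil => intro h; exact absurd rfl h
  | cons u L ih =>
    intro _
    rcases eq_or_ne L [] with rfl | hL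
    · simp [tu]
    · have h1 := ih hL
      have h2 := defect_ge u L.prod
      have hlen : (0:ℝ) ≤ L.length := by positivity
      simp only [List.map_cons, List.sum_cons, List.prod_cons, List.length_cons]
      have hcoe2 : tu (u * L.prod) = τ ((u : CircleDeg1Lift) * ((L.prod : CircleDeg1Liftˣ) : CircleDeg1Lift)) := rfl
      rw [hcoe2]
      push_cast
      have h2' : tu u + tu L.prod - 1 ≤ τ ((u : CircleDeg1Lift) * ((L.prod : CircleDeg1Liftˣ) : CircleDeg1Lift)) := h2
      linarith

/-- Lift a monotone periodic permutation of `ℝ` to a `CircleDeg1Lift`. -/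
def permLift (f : Equiv.Perm ℝ) (hm : Monotone ⇑f) (hp : ∀ x : ℝ, f (x + 1) = f x + 1) :
    CircleDeg1Lift := ⟨⟨⇑f, hm⟩, hp⟩

lemma permLift_coe (f : Equiv.Perm ℝ) (hm : Monotone ⇑f) (hp : ∀ x : ℝ, f (x + 1) = f x + 1) :
    ((permLift f hm hp : CircleDeg1Lift) : ℝ → ℝ) = ⇑f := rfl

lemma symm_monotone (f : Equiv.Perm ℝ) (hm : StrictMono ⇑f) : Monotone ⇑f.symm := by
  intro a b hab
  rcases le_or_gt (f.symm a) (f.symm b) with h | h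
  · exact h
  · exfalso
    have := hm h
    rw [f.apply_symm_apply, f.apply_symm_apply] at this
    exact absurd hab (not_le.mpr this)

lemma symm_periodic (f : Equiv.Perm ℝ) (hp : ∀ x : ℝ, f (x + 1) = f x + 1) :
    ∀ x : ℝ, f.symm (x + 1) = f.symm x + 1 := by
  intro x
  apply f.injective
  rw [f.apply_symm_apply, hp, f.apply_symm_apply]

/-- Lift a strictly monotone periodic permutation of `ℝ` to a unit of `CircleDeg1Lift`. -/
def permUnit (f : Equiv.Perm ℝ) (hm : StrictMono ⇑f) (hp : ∀ x : ℝ, f (x + 1) = f x + 1) :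
    CircleDeg1Liftˣ where
  val := permLift f hm.monotone hp
  inv := permLift f.symm (symm_monotone f hm) (symm_periodic f hp)
  val_inv := by
    ext x
    exact f.apply_symm_apply x
  inv_val := by
    ext x
    exact f.symm_apply_apply x

lemma permUnit_coe (f : Equiv.Perm ℝ) (hm : StrictMono ⇑f) (hp : ∀ x : ℝ, f (x + 1) = f x + 1) :
    (((permUnit f hm hp : CircleDeg1Liftˣ) : CircleDeg1Lift) : ℝ → ℝ) = ⇑f := rfl

/-- The monoid homomorphism sending a unit of `CircleDeg1Lift` to the underlying permutation. -/
def unitsToPerm : CircleDeg1Liftˣ →* Equiv.Perm ℝ where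
  toFun u := ⟨((u : CircleDeg1Lift) : ℝ → ℝ), (((u⁻¹ : CircleDeg1Liftˣ) : CircleDeg1Lift) : ℝ → ℝ),
    fun x => CircleDeg1Lift.units_inv_apply_apply u x,
    fun x => CircleDeg1Lift.units_apply_inv_apply u x⟩
  map_one' := by ext x; rfl
  map_mul' u v := by ext x; rfl

lemma unitsToPerm_injective : Function.Injective unitsToPerm := by
  intro u v h
  have hfun : ((u : CircleDeg1Lift) : ℝ → ℝ) = ((v : CircleDeg1Lift) : ℝ → ℝ) := by
    funext x
    exact DFunLike.congr_fun h x
  apply Units.ext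
  apply CircleDeg1Lift.ext
  intro x
  exact congrFun hfun x

lemma unitsToPerm_permUnit (f : Equiv.Perm ℝ) (hm : StrictMono ⇑f)
    (hp : ∀ x : ℝ, f (x + 1) = f x + 1) : unitsToPerm (permUnit f hm hp) = f := by
  ext x; rfl

end MWAux

/-- **Milnor–Wood inequality for surfaces with boundary.**
If `a₁, b₁, …, aₙ, bₙ, c₁, …, c_b` are lifts of orientation-preserving circle
homeomorphisms with `[a₁,b₁] ⋯ [aₙ,bₙ] c₁ ⋯ c_b = 1` (the surface group relation for the
compact oriented surface of genus `n` with `b ≥ 1` boundary components), then the sum of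
the rotation numbers of the boundary elements is at most `max 0 (2n + b − 2) = max(0, −χ)`. -/
theorem milnor_wood_inequality_surface_with_boundary
    (n b : ℕ) (hb1 : 1 ≤ b)
    (a : Fin n → Equiv.Perm ℝ) (a' : Fin n → Equiv.Perm ℝ) (c : Fin b → Equiv.Perm ℝ)
    (hamono : ∀ i, StrictMono ⇑(a i)) (hacont : ∀ i, Continuous ⇑(a i))
    (ha'mono : ∀ i, StrictMono ⇑(a' i)) (ha'cont : ∀ i, Continuous ⇑(a' i))
    (hcmono : ∀ j, StrictMono ⇑(c j)) (hccont : ∀ j, Continuous ⇑(c j))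
    (hpa : ∀ i, ∀ x : ℝ, a i (x + 1) = a i x + 1)
    (hpa' : ∀ i, ∀ x : ℝ, a' i (x + 1) = a' i x + 1)
    (hpc : ∀ j, ∀ x : ℝ, c j (x + 1) = c j x + 1)
    (hrel : (List.ofFn fun i => ⁅a i, a' i⁆).prod * (List.ofFn c).prod = 1)
    (rc : Fin b → ℝ)
    (hrc : ∀ j, Tendsto (fun k : ℕ => (⇑(c j))^[k] 0 / (k : ℝ)) atTop (𝓝 (rc j))) :
    ∑ j, rc j ≤ max 0 (2 * (n : ℝ) + (b : ℝ) - 2) := by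
    classical
  set ua : Fin n → CircleDeg1Liftˣ := fun i => MWAux.permUnit (a i) (hamono i) (hpa i) with hua
  set ua' : Fin n → CircleDeg1Liftˣ := fun i => MWAux.permUnit (a' i) (ha'mono i) (hpa' i) with hua'
  set uc : Fin b → CircleDeg1Liftˣ := fun j => MWAux.permUnit (c j) (hcmono j) (hpc j) with huc
  have hrcτ : ∀ j, rc j = MWAux.tu (uc j) := by
    intro j
    have h1 := CircleDeg1Lift.tendsto_translation_number₀
      ((uc j : CircleDeg1Liftˣ) : CircleDeg1Lift)
    have heq : ∀ k : ℕ,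
        ((((uc j : CircleDeg1Liftˣ) : CircleDeg1Lift) ^ k) : CircleDeg1Lift) 0 / (k : ℝ)
          = (⇑(c j))^[k] 0 / (k : ℝ) := by
      intro k
      rw [show ((((uc j : CircleDeg1Liftˣ) : CircleDeg1Lift) ^ k) : CircleDeg1Lift) 0
            = (((uc j : CircleDeg1Liftˣ) : CircleDeg1Lift) : ℝ → ℝ)^[k] 0 from
        congrFun (CircleDeg1Lift.coe_pow _ k) 0]
      rfl
    exact tendsto_nhds_unique (hrc j) ((h1.congr heq))
  have hsum : ∑ j, rc j = ∑ j, MWAux.tu (uc j) := Finset.sum_congr rfl (fun j _ => hrcτ j)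
  have hrelU : ((List.ofFn fun i => ⁅ua i, ua' i⁆).prod * (List.ofFn uc).prod
      : CircleDeg1Liftˣ) = 1 := by
    apply MWAux.unitsToPerm_injective
    rw [map_mul, map_one, map_list_prod, map_list_prod, List.map_ofFn, List.map_ofFn]
    have e1 : (MWAux.unitsToPerm ∘ fun i => ⁅ua i, ua' i⁆) = fun i => ⁅a i, a' i⁆ := by
      funext i
      simp only [Function.comp_apply, map_commutatorElement]
      rw [hua, hua']
      rw [MWAux.unitsToPerm_permUnit, MWAux.unitsToPerm_permUnit]
    have e2 : MWAux.unitsToPerm ∘ uc = c := by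
      funext j
      simp only [Function.comp_apply, huc]
      rw [MWAux.unitsToPerm_permUnit]
    rw [e1, e2]
    exact hrel
  by_cases hnb : n = 0 ∧ b = 1
  · obtain ⟨hn0, hb1'⟩ := hnb
    subst hn0; subst hb1'
    have hc1 : (List.ofFn uc).prod = 1 := by
      have : (List.ofFn fun i : Fin 0 => ⁅ua i, ua' i⁆) = ([] : List CircleDeg1Liftˣ) := by
        simp
      rw [this, List.prod_nil, one_mul] at hrelU
      exact hrelU
    have huc1 : uc 0 = 1 := by
      have h2 : List.ofFn uc = [uc 0] := by
        simp [List.ofFn_succ]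
      rw [h2, List.prod_cons, List.prod_nil, mul_one] at hc1
      exact hc1
    rw [hsum]
    have h3 : ∑ j : Fin 1, MWAux.tu (uc j) = 0 := by
      rw [Fin.sum_univ_one, huc1]
      show CircleDeg1Lift.translationNumber ((1 : CircleDeg1Liftˣ) : CircleDeg1Lift) = 0
      rw [Units.val_one, CircleDeg1Lift.translationNumber_one]
    rw [h3]
    exact le_max_left 0 _
  · obtain ⟨b', rfl⟩ : ∃ b', b = b' + 1 := ⟨b - 1, by omega⟩
    have hnb' : 1 ≤ n + b' := by
      rcases Nat.eq_zero_or_pos n with hn | hn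
      · rcases Nat.eq_zero_or_pos b' with hb' | hb'
        · exact absurd ⟨hn, by omega⟩ hnb
        · omega
      · omega
    set A : List CircleDeg1Liftˣ := List.ofFn fun i => ⁅ua i, ua' i⁆ with hA
    set C' : List CircleDeg1Liftˣ := List.ofFn fun j : Fin b' => uc j.castSucc with hC'
    set w : CircleDeg1Liftˣ := uc (Fin.last b') with hwdef
    have hofn : List.ofFn uc = C'.concat w := List.ofFn_succ' uc
    set M : List CircleDeg1Liftˣ := A ++ C' with hM
    have hMprod : M.prod * w = 1 := by
      have h0 : (C'.concat w).prod = C'.prod * w := List.prod_concat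
      rw [hM, List.prod_append, mul_assoc, ← h0, ← hofn]
      exact hrelU
    have hwinv : w = M.prod⁻¹ := eq_inv_of_mul_eq_one_right hMprod
    have hwτ : MWAux.tu w = - MWAux.tu M.prod := by
      rw [hwinv]
      exact CircleDeg1Lift.translationNumber_units_inv M.prod
    have hMne : M ≠ [] := by
      intro hnil
      apply_fun List.length at hnil
      simp only [hM, List.length_append, hA, hC', List.length_ofFn, List.length_nil] at hnil
      omega
    have hMlen : (M.length : ℝ) = (n : ℝ) + (b' : ℝ) := by
      simp [hM, hA, hC', List.length_append, List.length_ofFn]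
    have hprod := MWAux.prod_ge M hMne
    have hMsum : (M.map MWAux.tu).sum
        = (∑ i : Fin n, MWAux.tu ⁅ua i, ua' i⁆) + ∑ j : Fin b', MWAux.tu (uc j.castSucc) := by
      rw [hM, List.map_append, List.sum_append, hA, hC', List.map_ofFn, List.map_ofFn,
        List.sum_ofFn, List.sum_ofFn]
      rfl
    have hAben : (-(n : ℝ)) ≤ ∑ i : Fin n, MWAux.tu ⁅ua i, ua' i⁆ := by
      calc (-(n : ℝ)) = ∑ _i : Fin n, (-1 : ℝ) := by simp
        _ ≤ _ := Finset.sum_le_sum fun i _ => MWAux.comm_ge (ua i) (ua' i)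
    have hCsum : ∑ j : Fin (b' + 1), MWAux.tu (uc j)
        = (∑ j : Fin b', MWAux.tu (uc j.castSucc)) + MWAux.tu w := by
      rw [Fin.sum_univ_castSucc]
    rw [hsum, hCsum, hwτ]
    have hfinal : (∑ j : Fin b', MWAux.tu (uc j.castSucc)) + - MWAux.tu M.prod
        ≤ 2 * (n : ℝ) + ((b' : ℝ) + 1) - 2 := by
      rw [hMsum, hMlen] at hprod
      linarith [hAben]
    refine le_trans ?_ (le_max_right 0 _)
    calc (∑ j : Fin b', MWAux.tu (uc j.castSucc)) + - MWAux.tu M.prod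
        ≤ 2 * (n : ℝ) + ((b' : ℝ) + 1) - 2 := hfinal
      _ = 2 * (n : ℝ) + ((b' + 1 : ℕ) : ℝ) - 2 := by push_cast; ring
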